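/- For all positive integers n, m with n + m > 6 and n, m ≥ 1, every graph obtained from K_n + K_m by adding one edge between the two components has product irregularity strength 3. -/

import Mathlib

open Finset

open scoped Classical in
/-- The product degree of vertex `v`: the product of the labels of the edges incident with `v`. -/
noncomputable def pdeg {V : Type*} [Fintype V] (G : SimpleGraph V) (w : Sym2 V → ℕ) (v : V) : ℕ :=
  ∏ u ∈ Finset.univ.filter (fun u => G.Adj v u), w s(v, u)

/-- A labelling is product-irregular if distinct vertices have distinct product degrees. -/
def ProductIrregular {V : Type*} [Fintype V] (G : SimpleGraph V) (w : Sym2 V → ℕ) : Prop :=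
  Function.Injective (pdeg G w)

/-- The product irregularity strength: the least `s` admitting a product-irregular labelling
with labels in `{1,…,s}`. -/
noncomputable def ps {V : Type*} [Fintype V] (G : SimpleGraph V) : ℕ :=
  sInf {s : ℕ | ∃ w : Sym2 V → ℕ,
    (∀ u v : V, G.Adj u v → w s(u, v) ∈ Finset.Icc 1 s) ∧ ProductIrregular G w}
/-- The disjoint union `K_n + K_m` of two complete graphs. -/
def cliquePair (n m : ℕ) : SimpleGraph (Fin n ⊕ Fin m) where
  Adj a b := a ≠ b ∧ a.isLeft = b.isLeft
  symm := ⟨fun a b h => ⟨h.1.symm, h.2.symm⟩⟩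
  loopless := ⟨fun a h => h.1 rfl⟩

/-- Adding a single edge joining `u` and `v`. -/
def addEdge {V : Type*} (G : SimpleGraph V) (u v : V) : SimpleGraph V :=
  G ⊔ SimpleGraph.fromEdgeSet {s(u, v)}

namespace PS11
open Sum Finset

open scoped Classical

lemma prod_ite_one' {α : Type*} (s : Finset α) (p : α → Prop) [DecidablePred p] (c : ℕ) :
    ∏ x ∈ s, (if p x then c else 1) = c ^ (s.filter p).card := by
  rw [Finset.prod_ite, Finset.prod_const, Finset.prod_const, one_pow, mul_one]

lemma pow23_aux (x y : ℕ) :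
    (2 ^ x * 3 ^ y).factorization 2 = x ∧ (2 ^ x * 3 ^ y).factorization 3 = y := by
  rw [Nat.factorization_mul (pow_ne_zero x two_ne_zero) (pow_ne_zero y three_ne_zero),
    Nat.Prime.factorization_pow Nat.prime_two, Nat.Prime.factorization_pow Nat.prime_three]
  simp [Finsupp.single_apply]

lemma pow23_inj {a b c d : ℕ} (h : 2 ^ a * 3 ^ b = 2 ^ c * 3 ^ d) : a = c ∧ b = d := by
  have h2 := congrArg (fun x => x.factorization 2) h
  have h3 := congrArg (fun x => x.factorization 3) h
  have h2 : (2 ^ a * 3 ^ b).factorization 2 = (2 ^ c * 3 ^ d).factorization 2 := h2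
  have h3 : (2 ^ a * 3 ^ b).factorization 3 = (2 ^ c * 3 ^ d).factorization 3 := h3
  rw [(pow23_aux a b).1, (pow23_aux c d).1] at h2
  rw [(pow23_aux a b).2, (pow23_aux c d).2] at h3
  exact ⟨h2, h3⟩

variable {n m : ℕ}

lemma adj_iff (a : Fin n) (b : Fin m) (x y : Fin n ⊕ Fin m) :
    (addEdge (cliquePair n m) (inl a) (inr b)).Adj x y ↔
      ((x ≠ y ∧ x.isLeft = y.isLeft) ∨ (x = inl a ∧ y = inr b) ∨ (x = inr b ∧ y = inl a)) := by
  rw [addEdge, SimpleGraph.sup_adj]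
  show ((x ≠ y ∧ x.isLeft = y.isLeft) ∨ _) ↔ _
  rw [SimpleGraph.fromEdgeSet_adj]
  simp only [Set.mem_singleton_iff, Sym2.eq_iff]
  constructor
  · rintro (h | ⟨(⟨rfl, rfl⟩ | ⟨rfl, rfl⟩), hne⟩)
    · exact Or.inl h
    · exact Or.inr (Or.inl ⟨rfl, rfl⟩)
    · exact Or.inr (Or.inr ⟨rfl, rfl⟩)
  · rintro (h | ⟨rfl, rfl⟩ | ⟨rfl, rfl⟩)
    · exact Or.inl h
    · exact Or.inr ⟨Or.inl ⟨rfl, rfl⟩, by simp⟩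
    · exact Or.inr ⟨Or.inr ⟨rfl, rfl⟩, by simp⟩


variable (a : Fin n) (b : Fin m)

lemma filter_adj_inl (i : Fin n) :
    (Finset.univ.filter fun u => (addEdge (cliquePair n m) (inl a) (inr b)).Adj (inl i) u)
      = ((univ.erase i).map ⟨inl, Sum.inl_injective⟩) ∪ (if i = a then {inr b} else ∅) := by
  ext x
  cases x with
  | inl j =>
    simp only [Finset.mem_filter, Finset.mem_univ, true_and, adj_iff, Finset.mem_union,
      Finset.mem_map, Finset.mem_erase, Function.Embedding.coeFn_mk]
    constructor
    · rintro (⟨hne, -⟩ | ⟨-, h⟩ | ⟨h, -⟩)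
      · exact Or.inl ⟨j, ⟨by simpa [eq_comm, Sum.inl.injEq] using hne, trivial⟩, rfl⟩
      · exact absurd h (by simp)
      · exact absurd h (by simp)
    · rintro (⟨k, ⟨hk, -⟩, hkj⟩ | h)
      · cases hkj
        exact Or.inl ⟨by simpa [Sum.inl.injEq, eq_comm] using hk, rfl⟩
      · split at h
        · simp at h
        · simp at h
  | inr j =>
    simp only [Finset.mem_filter, Finset.mem_univ, true_and, adj_iff, Finset.mem_union,
      Finset.mem_map, Finset.mem_erase, Function.Embedding.coeFn_mk]
    constructor
    · rintro (⟨-, h⟩ | ⟨h1, h2⟩ | ⟨h, -⟩)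
      · simp [Sum.isLeft] at h
      · cases h1; cases h2
        simp
      · exact absurd h (by simp)
    · rintro (⟨k, -, hkj⟩ | h)
      · simp at hkj
      · split at h
        · simp only [Finset.mem_singleton] at h
          cases h
          subst ‹i = a›
          exact Or.inr (Or.inl ⟨rfl, rfl⟩)
        · simp at h

lemma filter_adj_inr (j : Fin m) :
    (Finset.univ.filter fun u => (addEdge (cliquePair n m) (inl a) (inr b)).Adj (inr j) u)
      = ((univ.erase j).map ⟨inr, Sum.inr_injective⟩) ∪ (if j = b then {inl a} else ∅) := by
  ext x
  cases x with
  | inr k =>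
    simp only [Finset.mem_filter, Finset.mem_univ, true_and, adj_iff, Finset.mem_union,
      Finset.mem_map, Finset.mem_erase, Function.Embedding.coeFn_mk]
    constructor
    · rintro (⟨hne, -⟩ | ⟨h, -⟩ | ⟨-, h⟩)
      · exact Or.inl ⟨k, ⟨by simpa [eq_comm, Sum.inr.injEq] using hne, trivial⟩, rfl⟩
      · exact absurd h (by simp)
      · exact absurd h (by simp)
    · rintro (⟨k', ⟨hk, -⟩, hkj⟩ | h)
      · cases hkj
        exact Or.inl ⟨by simpa [Sum.inr.injEq, eq_comm] using hk, rfl⟩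
      · split at h
        · simp at h
        · simp at h
  | inl k =>
    simp only [Finset.mem_filter, Finset.mem_univ, true_and, adj_iff, Finset.mem_union,
      Finset.mem_map, Finset.mem_erase, Function.Embedding.coeFn_mk]
    constructor
    · rintro (⟨-, h⟩ | ⟨h, -⟩ | ⟨h1, h2⟩)
      · simp [Sum.isLeft] at h
      · exact absurd h (by simp)
      · cases h1; cases h2
        simp
    · rintro (⟨k', -, hkj⟩ | h)
      · simp at hkj
      · split at h
        · simp only [Finset.mem_singleton] at h
          cases h
          subst ‹j = b›
          exact Or.inr (Or.inr ⟨rfl, rfl⟩)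
        · simp at h

lemma disj_inl (i : Fin n) : Disjoint ((univ.erase i).map ⟨inl, Sum.inl_injective⟩ : Finset (Fin n ⊕ Fin m))
    (if i = a then {inr b} else ∅) := by
  split
  · simp [Finset.disjoint_singleton_right]
  · simp

lemma disj_inr (j : Fin m) : Disjoint ((univ.erase j).map ⟨inr, Sum.inr_injective⟩ : Finset (Fin n ⊕ Fin m))
    (if j = b then {inl a} else ∅) := by
  split
  · simp [Finset.disjoint_singleton_right]
  · simp

lemma pdeg_inl (w : Sym2 (Fin n ⊕ Fin m) → ℕ) (i : Fin n) :
    pdeg (addEdge (cliquePair n m) (inl a) (inr b)) w (inl i)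
      = (∏ j ∈ univ.erase i, w s(inl i, inl j)) * (if i = a then w s(inl a, inr b) else 1) := by
  rw [pdeg, filter_adj_inl, Finset.prod_union (disj_inl a b i), Finset.prod_map]
  congr 1
  split
  · subst ‹i = a›
    simp
  · simp

lemma pdeg_inr (w : Sym2 (Fin n ⊕ Fin m) → ℕ) (j : Fin m) :
    pdeg (addEdge (cliquePair n m) (inl a) (inr b)) w (inr j)
      = (∏ k ∈ univ.erase j, w s(inr j, inr k)) * (if j = b then w s(inl a, inr b) else 1) := by
  rw [pdeg, filter_adj_inr, Finset.prod_union (disj_inr a b j), Finset.prod_map]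
  congr 1
  split
  · subst ‹j = b›
    simp [Sym2.eq_swap]
  · simp

lemma deg_inl (i : Fin n) :
    (Finset.univ.filter fun u => (addEdge (cliquePair n m) (inl a) (inr b)).Adj (inl i) u).card
      = (n - 1) + (if i = a then 1 else 0) := by
  rw [filter_adj_inl, Finset.card_union_of_disjoint (disj_inl a b i), Finset.card_map,
    Finset.card_erase_of_mem (Finset.mem_univ i)]
  simp only [Finset.card_univ, Fintype.card_fin]
  split <;> simp

lemma deg_inr (j : Fin m) :
    (Finset.univ.filter fun u => (addEdge (cliquePair n m) (inl a) (inr b)).Adj (inr j) u).card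
      = (m - 1) + (if j = b then 1 else 0) := by
  rw [filter_adj_inr, Finset.card_union_of_disjoint (disj_inr a b j), Finset.card_map,
    Finset.card_erase_of_mem (Finset.mem_univ j)]
  simp only [Finset.card_univ, Fintype.card_fin]
  split <;> simp



lemma card_thr0 {k : ℕ} (i : Fin k) :
    (univ.filter fun j : Fin k => k ≤ (i : ℕ) + (j : ℕ)).card = (i : ℕ) := by
  have hik := i.isLt
  have : (univ.filter fun j : Fin k => k ≤ (i : ℕ) + (j : ℕ)).card
      = (Finset.Ico (k - (i : ℕ)) k).card := by
    apply Finset.card_nbij (fun (j : Fin k) => (j : ℕ))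
    · intro j hj
      simp only [Finset.mem_coe, Finset.mem_filter, Finset.mem_univ, true_and] at hj
      have := j.isLt
      simp only [Finset.mem_coe, Finset.mem_Ico]
      omega
    · intro x _ y _ hxy
      exact Fin.ext hxy
    · intro x hx
      simp only [Finset.coe_Ico, Set.mem_Ico] at hx
      refine ⟨⟨x, hx.2⟩, ?_, rfl⟩
      simp only [Finset.mem_coe, Finset.mem_filter, Finset.mem_univ, true_and]
      omega
  rw [this, Nat.card_Ico]
  omega

lemma filter_erase_comm {k : ℕ} (i : Fin k) (p : Fin k → Prop) [DecidablePred p] :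
    (univ.erase i).filter p = (univ.filter p).erase i := by
  ext j
  simp only [Finset.mem_filter, Finset.mem_erase, Finset.mem_univ, true_and, and_comm]

lemma card_thr {k : ℕ} (i : Fin k) :
    ((univ.erase i).filter fun j : Fin k => k ≤ (i : ℕ) + (j : ℕ)).card
      = (i : ℕ) - (if k ≤ 2 * (i : ℕ) then 1 else 0) := by
  rw [filter_erase_comm]
  by_cases h : k ≤ 2 * (i : ℕ)
  · rw [Finset.card_erase_of_mem (by simp only [Finset.mem_filter, Finset.mem_univ, true_and]; omega),
      card_thr0]
    simp [h]
  · rw [Finset.erase_eq_of_notMem (by simp only [Finset.mem_filter, Finset.mem_univ, true_and]; omega),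
      card_thr0]
    simp [h]

lemma card_star {k u v : ℕ} (huv : u ≠ v) (i : Fin k) :
    ((univ.erase i).filter fun j : Fin k =>
        (((i : ℕ) = u ∧ (j : ℕ) = v) ∨ ((i : ℕ) = v ∧ (j : ℕ) = u))).card
      = if ((i : ℕ) = u ∧ v < k) ∨ ((i : ℕ) = v ∧ u < k) then 1 else 0 := by
  have hik := i.isLt
  split_ifs with h
  · rcases h with ⟨hi, hv⟩ | ⟨hi, hu⟩
    · rw [show ((univ.erase i).filter fun j : Fin k =>
          (((i : ℕ) = u ∧ (j : ℕ) = v) ∨ ((i : ℕ) = v ∧ (j : ℕ) = u))) = {(⟨v, hv⟩ : Fin k)} from ?_]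
      · exact Finset.card_singleton _
      · ext j
        have := j.isLt
        simp [Fin.ext_iff]
        omega
    · rw [show ((univ.erase i).filter fun j : Fin k =>
          (((i : ℕ) = u ∧ (j : ℕ) = v) ∨ ((i : ℕ) = v ∧ (j : ℕ) = u))) = {(⟨u, hu⟩ : Fin k)} from ?_]
      · exact Finset.card_singleton _
      · ext j
        have := j.isLt
        simp [Fin.ext_iff]
        omega
  · rw [Finset.card_eq_zero.mpr]
    ext j
    have := j.isLt
    simp only [Finset.mem_filter, Finset.mem_erase, Finset.mem_univ, true_and,
      Finset.notMem_empty, iff_false, not_and, ne_eq, and_true]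
    intro hne
    omega

/-- the 2-major scheme weight on a clique of size `k` -/
def w2 (k : ℕ) (i j : Fin k) : ℕ :=
  (if k ≤ (i : ℕ) + (j : ℕ) then 2 else 1) *
    (if ((i : ℕ) = 0 ∧ (j : ℕ) = k - k / 2) ∨ ((i : ℕ) = k - k / 2 ∧ (j : ℕ) = 0) then 3 else 1)

/-- the 3-major scheme weight on a clique of size `k` -/
def w3 (k : ℕ) (i j : Fin k) : ℕ :=
  (if k ≤ (i : ℕ) + (j : ℕ) then 3 else 1) *
    (if ((i : ℕ) = 1 ∧ (j : ℕ) = k - k / 2) ∨ ((i : ℕ) = k - k / 2 ∧ (j : ℕ) = 1) then 2 else 1)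

lemma w2_symm (k : ℕ) (i j : Fin k) : w2 k i j = w2 k j i := by
  unfold w2
  rw [Nat.add_comm (i:ℕ) (j:ℕ)]
  congr 1
  rcases Nat.decEq (i : ℕ) 0 with h | h <;> by_cases h1 : ((i:ℕ) = 0) <;> by_cases h2 : ((j:ℕ) = 0) <;>
    by_cases h3 : ((i:ℕ) = k - k/2) <;> by_cases h4 : ((j:ℕ) = k - k/2) <;> simp [h1, h2, h3, h4] <;> tauto

lemma w3_symm (k : ℕ) (i j : Fin k) : w3 k i j = w3 k j i := by
  unfold w3
  rw [Nat.add_comm (i:ℕ) (j:ℕ)]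
  congr 1
  by_cases h1 : ((i:ℕ) = 1) <;> by_cases h2 : ((j:ℕ) = 1) <;>
    by_cases h3 : ((i:ℕ) = k - k/2) <;> by_cases h4 : ((j:ℕ) = k - k/2) <;> simp [h1, h2, h3, h4] <;> tauto

lemma w2_mem {k : ℕ} (i j : Fin k) (hij : i ≠ j) : w2 k i j ∈ Finset.Icc 1 3 := by
  have hi := i.isLt
  have hj := j.isLt
  have hij' : (i : ℕ) ≠ (j : ℕ) := fun h => hij (Fin.ext h)
  unfold w2
  split_ifs with h1 h2 h2 <;> simp only [Finset.mem_Icc] <;> omega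

lemma w3_mem {k : ℕ} (hk : 4 ≤ k) (i j : Fin k) (hij : i ≠ j) : w3 k i j ∈ Finset.Icc 1 3 := by
  have hi := i.isLt
  have hj := j.isLt
  have hij' : (i : ℕ) ≠ (j : ℕ) := fun h => hij (Fin.ext h)
  unfold w3
  split_ifs with h1 h2 h2 <;> simp only [Finset.mem_Icc] <;> omega

lemma prod_w2 {k : ℕ} (i : Fin k) (hk : 1 ≤ k) :
    ∏ j ∈ univ.erase i, w2 k i j
      = 2 ^ ((i : ℕ) - (if k ≤ 2 * (i : ℕ) then 1 else 0)) *
        3 ^ (if ((i : ℕ) = 0 ∧ k - k / 2 < k) ∨ ((i : ℕ) = k - k / 2 ∧ 0 < k) then 1 else 0) := by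
  have h0 : (0:ℕ) ≠ k - k/2 := by omega
  unfold w2
  rw [Finset.prod_mul_distrib, prod_ite_one', prod_ite_one', card_thr, card_star h0]

lemma prod_w3 {k : ℕ} (i : Fin k) (hk : 3 ≤ k) :
    ∏ j ∈ univ.erase i, w3 k i j
      = 3 ^ ((i : ℕ) - (if k ≤ 2 * (i : ℕ) then 1 else 0)) *
        2 ^ (if ((i : ℕ) = 1 ∧ k - k / 2 < k) ∨ ((i : ℕ) = k - k / 2 ∧ 1 < k) then 1 else 0) := by
  have h0 : (1:ℕ) ≠ k - k/2 := by omega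
  unfold w3
  rw [Finset.prod_mul_distrib, prod_ite_one', prod_ite_one', card_thr, card_star h0]

lemma prod_erase_comp {k : ℕ} (e : Equiv.Perm (Fin k)) (f : Fin k → ℕ) (i : Fin k) :
    ∏ j ∈ univ.erase i, f (e j) = ∏ j ∈ univ.erase (e i), f j := by
  apply Finset.prod_bij' (fun (j : Fin k) _ => e j) (fun (j : Fin k) _ => e.symm j)
  · intro j hj
    simp only [Finset.mem_erase, Finset.mem_univ, and_true, ne_eq] at hj ⊢
    simpa using hj
  · intro j hj
    simp only [Finset.mem_erase, Finset.mem_univ, and_true, ne_eq] at hj ⊢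
    intro hc
    apply hj
    rw [← hc]
    simp
  · intro j _
    simp
  · intro j _
    simp
  · intro j _
    rfl


/-- glue two clique labellings and a bridge label into a `Sym2` labelling -/
def glue (wl : Fin n → Fin n → ℕ) (hl : ∀ i j, wl i j = wl j i)
    (wr : Fin m → Fin m → ℕ) (hr : ∀ i j, wr i j = wr j i) (l : ℕ) :
    Sym2 (Fin n ⊕ Fin m) → ℕ :=
  Sym2.lift ⟨fun x y =>
    match x, y with
    | inl i, inl j => wl i j
    | inr i, inr j => wr i j
    | inl _, inr _ => l
    | inr _, inl _ => l, by
      intro x y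
      rcases x with i | i <;> rcases y with j | j
      · exact hl i j
      · rfl
      · rfl
      · exact hr i j⟩

@[simp] lemma glue_ll (wl hl wr hr l) (i j : Fin n) :
    glue (m := m) wl hl wr hr l s(inl i, inl j) = wl i j := rfl

@[simp] lemma glue_rr (wl hl wr hr l) (i j : Fin m) :
    glue (n := n) wl hl wr hr l s(inr i, inr j) = wr i j := rfl

@[simp] lemma glue_lr (wl hl wr hr l) (i : Fin n) (j : Fin m) :
    glue wl hl wr hr l s(inl i, inr j) = l := rfl


lemma adj_ll {a : Fin n} {b : Fin m} {i j : Fin n}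
    (h : (addEdge (cliquePair n m) (inl a) (inr b)).Adj (inl i) (inl j)) : i ≠ j := by
  rw [adj_iff] at h
  rcases h with ⟨hne, -⟩ | ⟨-, h⟩ | ⟨h, -⟩
  · exact fun he => hne (by rw [he])
  · exact absurd h (by simp)
  · exact absurd h (by simp)

lemma adj_rr {a : Fin n} {b : Fin m} {i j : Fin m}
    (h : (addEdge (cliquePair n m) (inl a) (inr b)).Adj (inr i) (inr j)) : i ≠ j := by
  rw [adj_iff] at h
  rcases h with ⟨hne, -⟩ | ⟨h, -⟩ | ⟨-, h⟩
  · exact fun he => hne (by rw [he])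
  · exact absurd h (by simp)
  · exact absurd h (by simp)

lemma pdeg_glue_inl (a : Fin n) (b : Fin m) (wl hl wr hr l) (i : Fin n) :
    pdeg (addEdge (cliquePair n m) (inl a) (inr b)) (glue wl hl wr hr l) (inl i)
      = (∏ j ∈ univ.erase i, wl i j) * (if i = a then l else 1) := by
  rw [pdeg_inl]
  simp only [glue_ll, glue_lr]

lemma pdeg_glue_inr (a : Fin n) (b : Fin m) (wl hl wr hr l) (j : Fin m) :
    pdeg (addEdge (cliquePair n m) (inl a) (inr b)) (glue wl hl wr hr l) (inr j)
      = (∏ k ∈ univ.erase j, wr j k) * (if j = b then l else 1) := by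
  rw [pdeg_inr]
  simp only [glue_rr, glue_lr]

lemma swap_eq_iff {k : ℕ} (a r : Fin k) (i : Fin k) :
    (Equiv.swap a r) i = r ↔ i = a := by
  constructor
  · intro h
    apply (Equiv.swap a r).injective
    rw [h, Equiv.swap_apply_left]
  · rintro rfl
    exact Equiv.swap_apply_left _ _

set_option maxHeartbeats 2000000 in
lemma upperAB (hn : 1 ≤ n) (hm : 5 ≤ m) (a : Fin n) (b : Fin m) :
    ∃ w : Sym2 (Fin n ⊕ Fin m) → ℕ,
      (∀ u v, (addEdge (cliquePair n m) (inl a) (inr b)).Adj u v → w s(u, v) ∈ Finset.Icc 1 3) ∧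
      ProductIrregular (addEdge (cliquePair n m) (inl a) (inr b)) w := by
  have hm0 : 0 < m := by omega
  set arv : ℕ := if n ≤ 3 then n / 2 else n - 1 with harv
  set brv : ℕ := if n ≤ 4 then 1 else m - 1 with hbrv
  have harv2 : (n ≤ 3 ∧ arv = n / 2) ∨ (4 ≤ n ∧ arv = n - 1) := by
    rcases le_or_gt n 3 with h | h
    · exact Or.inl ⟨h, by rw [harv, if_pos h]⟩
    · exact Or.inr ⟨by omega, by rw [harv, if_neg (by omega)]⟩
  have hbrv2 : (n ≤ 4 ∧ brv = 1) ∨ (5 ≤ n ∧ brv = m - 1) := by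
    rcases le_or_gt n 4 with h | h
    · exact Or.inl ⟨h, by rw [hbrv, if_pos h]⟩
    · exact Or.inr ⟨by omega, by rw [hbrv, if_neg (by omega)]⟩
  clear_value arv brv
  clear harv hbrv
  have harlt : arv < n := by omega
  have hbrlt : brv < m := by omega
  set ar : Fin n := ⟨arv, harlt⟩
  set br : Fin m := ⟨brv, hbrlt⟩
  set σ : Equiv.Perm (Fin n) := Equiv.swap a ar with hσ
  set τ : Equiv.Perm (Fin m) := Equiv.swap b br with hτ
  set wl : Fin n → Fin n → ℕ := fun i j => w2 n (σ i) (σ j) with hwl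
  set wr : Fin m → Fin m → ℕ := fun i j => w3 m (τ i) (τ j) with hwr
  have hl : ∀ i j, wl i j = wl j i := fun i j => w2_symm n (σ i) (σ j)
  have hr : ∀ i j, wr i j = wr j i := fun i j => w3_symm m (τ i) (τ j)
  refine ⟨glue wl hl wr hr 2, ?_, ?_⟩
  · intro u v huv
    rcases u with i | i <;> rcases v with j | j
    · exact w2_mem _ _ (fun he => adj_ll huv (σ.injective he))
    · simp only [glue_lr]
      simp
    · rw [Sym2.eq_swap]
      simp only [glue_lr]
      simp
    · exact w3_mem (by omega) _ _ (fun he => adj_rr huv (τ.injective he))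
  · -- injectivity
    have pL : ∀ i : Fin n, pdeg (addEdge (cliquePair n m) (inl a) (inr b)) (glue wl hl wr hr 2) (inl i)
        = 2 ^ ((((σ i : ℕ)) - (if n ≤ 2 * (σ i : ℕ) then 1 else 0)) + (if (σ i : ℕ) = arv then 1 else 0)) *
          3 ^ (if ((σ i : ℕ) = 0 ∧ n - n / 2 < n) ∨ ((σ i : ℕ) = n - n / 2 ∧ 0 < n) then 1 else 0) := by
      intro i
      rw [pdeg_glue_inl, hwl]
      rw [show (∏ j ∈ univ.erase i, w2 n (σ i) (σ j)) = ∏ j ∈ univ.erase (σ i), w2 n (σ i) j from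
        prod_erase_comp σ _ i]
      rw [prod_w2 _ (by omega)]
      have hia : (i = a) ↔ ((σ i : ℕ) = arv) := by
        rw [← swap_eq_iff a ar i, Fin.ext_iff]
      simp only [hia]
      split_ifs <;> ring
    have pR : ∀ j : Fin m, pdeg (addEdge (cliquePair n m) (inl a) (inr b)) (glue wl hl wr hr 2) (inr j)
        = 2 ^ ((if ((τ j : ℕ) = 1 ∧ m - m / 2 < m) ∨ ((τ j : ℕ) = m - m / 2 ∧ 1 < m) then 1 else 0) +
            (if (τ j : ℕ) = brv then 1 else 0)) *
          3 ^ (((τ j : ℕ)) - (if m ≤ 2 * (τ j : ℕ) then 1 else 0)) := by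
      intro j
      rw [pdeg_glue_inr, hwr]
      rw [show (∏ k ∈ univ.erase j, w3 m (τ j) (τ k)) = ∏ k ∈ univ.erase (τ j), w3 m (τ j) k from
        prod_erase_comp τ _ j]
      rw [prod_w3 _ (by omega)]
      have hjb : (j = b) ↔ ((τ j : ℕ) = brv) := by
        rw [← swap_eq_iff b br j, Fin.ext_iff]
      simp only [hjb]
      split_ifs <;> ring
    intro x y hxy
    rcases x with i | i <;> rcases y with j | j
    · rw [pL, pL] at hxy
      obtain ⟨h1, h2⟩ := pow23_inj hxy
      have hv1 := (σ i).isLt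
      have hv2 := (σ j).isLt
      have : (σ i : ℕ) = (σ j : ℕ) := by split_ifs at h1 h2 <;> omega
      exact congrArg inl (σ.injective (Fin.ext this))
    · exfalso
      rw [pL, pR] at hxy
      obtain ⟨h1, h2⟩ := pow23_inj hxy
      have hv1 := (σ i).isLt
      have hv2 := (τ j).isLt
      split_ifs at h1 h2 <;> omega
    · exfalso
      rw [pL, pR] at hxy
      obtain ⟨h1, h2⟩ := pow23_inj hxy.symm
      have hv1 := (σ j).isLt
      have hv2 := (τ i).isLt
      split_ifs at h1 h2 <;> omega
    · rw [pR, pR] at hxy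
      obtain ⟨h1, h2⟩ := pow23_inj hxy
      have hv1 := (τ i).isLt
      have hv2 := (τ j).isLt
      have : (τ i : ℕ) = (τ j : ℕ) := by split_ifs at h1 h2 <;> omega
      exact congrArg inr (τ.injective (Fin.ext this))


set_option maxHeartbeats 2000000 in
lemma upperC (hn : 5 ≤ n) (hm : 1 ≤ m) (hm4 : m ≤ 4) (a : Fin n) (b : Fin m) :
    ∃ w : Sym2 (Fin n ⊕ Fin m) → ℕ,
      (∀ u v, (addEdge (cliquePair n m) (inl a) (inr b)).Adj u v → w s(u, v) ∈ Finset.Icc 1 3) ∧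
      ProductIrregular (addEdge (cliquePair n m) (inl a) (inr b)) w := by
  set brv : ℕ := if m ≤ 3 then m / 2 else m - 1 with hbrv
  have hbrv2 : (m ≤ 3 ∧ brv = m / 2) ∨ (4 ≤ m ∧ brv = m - 1) := by
    rcases le_or_gt m 3 with h | h
    · exact Or.inl ⟨h, by rw [hbrv, if_pos h]⟩
    · exact Or.inr ⟨by omega, by rw [hbrv, if_neg (by omega)]⟩
  clear_value brv
  clear hbrv
  have harlt : 1 < n := by omega
  have hbrlt : brv < m := by omega
  set ar : Fin n := ⟨1, harlt⟩
  set br : Fin m := ⟨brv, hbrlt⟩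
  set σ : Equiv.Perm (Fin n) := Equiv.swap a ar with hσ
  set τ : Equiv.Perm (Fin m) := Equiv.swap b br with hτ
  set wl : Fin n → Fin n → ℕ := fun i j => w3 n (σ i) (σ j) with hwl
  set wr : Fin m → Fin m → ℕ := fun i j => w2 m (τ i) (τ j) with hwr
  have hl : ∀ i j, wl i j = wl j i := fun i j => w3_symm n (σ i) (σ j)
  have hr : ∀ i j, wr i j = wr j i := fun i j => w2_symm m (τ i) (τ j)
  refine ⟨glue wl hl wr hr 2, ?_, ?_⟩
  · intro u v huv
    rcases u with i | i <;> rcases v with j | j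
    · exact w3_mem (by omega) _ _ (fun he => adj_ll huv (σ.injective he))
    · simp only [glue_lr]
      simp
    · rw [Sym2.eq_swap]
      simp only [glue_lr]
      simp
    · exact w2_mem _ _ (fun he => adj_rr huv (τ.injective he))
  · have pL : ∀ i : Fin n, pdeg (addEdge (cliquePair n m) (inl a) (inr b)) (glue wl hl wr hr 2) (inl i)
        = 2 ^ ((if ((σ i : ℕ) = 1 ∧ n - n / 2 < n) ∨ ((σ i : ℕ) = n - n / 2 ∧ 1 < n) then 1 else 0) +
            (if (σ i : ℕ) = 1 then 1 else 0)) *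
          3 ^ (((σ i : ℕ)) - (if n ≤ 2 * (σ i : ℕ) then 1 else 0)) := by
      intro i
      rw [pdeg_glue_inl, hwl]
      rw [show (∏ j ∈ univ.erase i, w3 n (σ i) (σ j)) = ∏ j ∈ univ.erase (σ i), w3 n (σ i) j from
        prod_erase_comp σ _ i]
      rw [prod_w3 _ (by omega)]
      have hia : (i = a) ↔ ((σ i : ℕ) = 1) := by
        rw [← swap_eq_iff a ar i, Fin.ext_iff]
      simp only [hia]
      split_ifs <;> ring
    have pR : ∀ j : Fin m, pdeg (addEdge (cliquePair n m) (inl a) (inr b)) (glue wl hl wr hr 2) (inr j)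
        = 2 ^ ((((τ j : ℕ)) - (if m ≤ 2 * (τ j : ℕ) then 1 else 0)) + (if (τ j : ℕ) = brv then 1 else 0)) *
          3 ^ (if ((τ j : ℕ) = 0 ∧ m - m / 2 < m) ∨ ((τ j : ℕ) = m - m / 2 ∧ 0 < m) then 1 else 0) := by
      intro j
      rw [pdeg_glue_inr, hwr]
      rw [show (∏ k ∈ univ.erase j, w2 m (τ j) (τ k)) = ∏ k ∈ univ.erase (τ j), w2 m (τ j) k from
        prod_erase_comp τ _ j]
      rw [prod_w2 _ (by omega)]
      have hjb : (j = b) ↔ ((τ j : ℕ) = brv) := by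
        rw [← swap_eq_iff b br j, Fin.ext_iff]
      simp only [hjb]
      split_ifs <;> ring
    intro x y hxy
    rcases x with i | i <;> rcases y with j | j
    · rw [pL, pL] at hxy
      obtain ⟨h1, h2⟩ := pow23_inj hxy
      have hv1 := (σ i).isLt
      have hv2 := (σ j).isLt
      have : (σ i : ℕ) = (σ j : ℕ) := by split_ifs at h1 h2 <;> omega
      exact congrArg inl (σ.injective (Fin.ext this))
    · exfalso
      rw [pL, pR] at hxy
      obtain ⟨h1, h2⟩ := pow23_inj hxy
      have hv1 := (σ i).isLt
      have hv2 := (τ j).isLt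
      split_ifs at h1 h2 <;> omega
    · exfalso
      rw [pL, pR] at hxy
      obtain ⟨h1, h2⟩ := pow23_inj hxy.symm
      have hv1 := (σ j).isLt
      have hv2 := (τ i).isLt
      split_ifs at h1 h2 <;> omega
    · rw [pR, pR] at hxy
      obtain ⟨h1, h2⟩ := pow23_inj hxy
      have hv1 := (τ i).isLt
      have hv2 := (τ j).isLt
      have : (τ i : ℕ) = (τ j : ℕ) := by split_ifs at h1 h2 <;> omega
      exact congrArg inr (τ.injective (Fin.ext this))


lemma upperTables (a : Fin n) (b : Fin m)
    (TL : Fin n → Fin n → ℕ) (TR : Fin m → Fin m → ℕ) (ar : Fin n) (br : Fin m)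
    (VL : Fin n → ℕ) (VR : Fin m → ℕ)
    (hsymL : ∀ i j, TL i j = TL j i) (hsymR : ∀ i j, TR i j = TR j i)
    (hmemL : ∀ i j : Fin n, i ≠ j → TL i j ∈ Finset.Icc 1 3)
    (hmemR : ∀ i j : Fin m, i ≠ j → TR i j ∈ Finset.Icc 1 3)
    (hVL : ∀ r, (∏ j ∈ univ.erase r, TL r j) * (if r = ar then 2 else 1) = VL r)
    (hVR : ∀ r, (∏ k ∈ univ.erase r, TR r k) * (if r = br then 2 else 1) = VR r)
    (hinjL : ∀ r r', VL r = VL r' → r = r')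
    (hinjR : ∀ r r', VR r = VR r' → r = r')
    (hdisj : ∀ r r', VL r ≠ VR r') :
    ∃ w : Sym2 (Fin n ⊕ Fin m) → ℕ,
      (∀ u v, (addEdge (cliquePair n m) (inl a) (inr b)).Adj u v → w s(u, v) ∈ Finset.Icc 1 3) ∧
      ProductIrregular (addEdge (cliquePair n m) (inl a) (inr b)) w := by
  set σ : Equiv.Perm (Fin n) := Equiv.swap a ar with hσ
  set τ : Equiv.Perm (Fin m) := Equiv.swap b br with hτ
  set wl : Fin n → Fin n → ℕ := fun i j => TL (σ i) (σ j) with hwl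
  set wr : Fin m → Fin m → ℕ := fun i j => TR (τ i) (τ j) with hwr
  have hl : ∀ i j, wl i j = wl j i := fun i j => hsymL (σ i) (σ j)
  have hr : ∀ i j, wr i j = wr j i := fun i j => hsymR (τ i) (τ j)
  refine ⟨glue wl hl wr hr 2, ?_, ?_⟩
  · intro u v huv
    rcases u with i | i <;> rcases v with j | j
    · exact hmemL _ _ (fun he => adj_ll huv (σ.injective he))
    · simp only [glue_lr]
      simp
    · rw [Sym2.eq_swap]
      simp only [glue_lr]
      simp
    · exact hmemR _ _ (fun he => adj_rr huv (τ.injective he))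
  · have pL : ∀ i : Fin n, pdeg (addEdge (cliquePair n m) (inl a) (inr b)) (glue wl hl wr hr 2) (inl i)
        = VL (σ i) := by
      intro i
      rw [pdeg_glue_inl, hwl, ← hVL (σ i)]
      rw [show (∏ j ∈ univ.erase i, TL (σ i) (σ j)) = ∏ j ∈ univ.erase (σ i), TL (σ i) j from
        prod_erase_comp σ _ i]
      congr 1
      have hia : (i = a) ↔ (σ i = ar) := (swap_eq_iff a ar i).symm
      simp only [hia]
    have pR : ∀ j : Fin m, pdeg (addEdge (cliquePair n m) (inl a) (inr b)) (glue wl hl wr hr 2) (inr j)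
        = VR (τ j) := by
      intro j
      rw [pdeg_glue_inr, hwr, ← hVR (τ j)]
      rw [show (∏ k ∈ univ.erase j, TR (τ j) (τ k)) = ∏ k ∈ univ.erase (τ j), TR (τ j) k from
        prod_erase_comp τ _ j]
      congr 1
      have hjb : (j = b) ↔ (τ j = br) := (swap_eq_iff b br j).symm
      simp only [hjb]
    intro x y hxy
    rcases x with i | i <;> rcases y with j | j
    · rw [pL, pL] at hxy
      exact congrArg inl (σ.injective (hinjL _ _ hxy))
    · exact absurd (pL i ▸ pR j ▸ hxy) (hdisj _ _)
    · exact absurd ((pL j ▸ pR i ▸ hxy).symm) (hdisj _ _)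
    · rw [pR, pR] at hxy
      exact congrArg inr (τ.injective (hinjR _ _ hxy))


/-- symmetrize a table -/
def symt {k : ℕ} (f : ℕ → ℕ → ℕ) (i j : Fin k) : ℕ :=
  f (min (i : ℕ) (j : ℕ)) (max (i : ℕ) (j : ℕ))

lemma symt_symm {k : ℕ} (f : ℕ → ℕ → ℕ) (i j : Fin k) : symt f i j = symt f j i := by
  unfold symt
  rw [min_comm, max_comm]

lemma upperD34 (a : Fin 3) (b : Fin 4) :
    ∃ w : Sym2 (Fin 3 ⊕ Fin 4) → ℕ,
      (∀ u v, (addEdge (cliquePair 3 4) (inl a) (inr b)).Adj u v → w s(u, v) ∈ Finset.Icc 1 3) ∧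
      ProductIrregular (addEdge (cliquePair 3 4) (inl a) (inr b)) w := by
  exact upperTables a b
    (symt (fun x y => if x = 0 then (if y = 1 then 1 else 3) else 2))
    (symt (fun x y => if x = 0 then (if y = 1 then 1 else if y = 2 then 2 else 3) else 3))
    1 0 ![3, 4, 6] ![12, 9, 18, 27]
    (symt_symm _) (symt_symm _) (by decide) (by decide) (by decide) (by decide)
    (by decide) (by decide) (by decide)

lemma upperD43 (a : Fin 4) (b : Fin 3) :
    ∃ w : Sym2 (Fin 4 ⊕ Fin 3) → ℕ,
      (∀ u v, (addEdge (cliquePair 4 3) (inl a) (inr b)).Adj u v → w s(u, v) ∈ Finset.Icc 1 3) ∧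
      ProductIrregular (addEdge (cliquePair 4 3) (inl a) (inr b)) w := by
  exact upperTables a b
    (symt (fun x y => if x = 0 then (if y = 3 then 3 else 1) else if x = 1 then 2 else 3))
    (symt (fun x y => if x = 0 then 1 else 2))
    1 1 ![3, 8, 6, 18] ![1, 4, 2]
    (symt_symm _) (symt_symm _) (by decide) (by decide) (by decide) (by decide)
    (by decide) (by decide) (by decide)

lemma upperD44 (a : Fin 4) (b : Fin 4) :
    ∃ w : Sym2 (Fin 4 ⊕ Fin 4) → ℕ,
      (∀ u v, (addEdge (cliquePair 4 4) (inl a) (inr b)).Adj u v → w s(u, v) ∈ Finset.Icc 1 3) ∧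
      ProductIrregular (addEdge (cliquePair 4 4) (inl a) (inr b)) w := by
  exact upperTables a b
    (symt (fun x y => if x = 0 then (if y = 2 then 3 else 1) else if x = 1 then (if y = 2 then 1 else 2) else 2))
    (symt (fun x y => if x = 0 then (if y = 1 then 1 else 2) else if x = 1 then 3 else 2))
    3 2 ![3, 2, 6, 8] ![4, 9, 24, 12]
    (symt_symm _) (symt_symm _) (by decide) (by decide) (by decide) (by decide)
    (by decide) (by decide) (by decide)


lemma pdeg_eq {V : Type*} [Fintype V] (G : SimpleGraph V) (w : Sym2 V → ℕ) (v : V) :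
    pdeg G w v = ∏ u ∈ Finset.univ.filter (fun u => G.Adj v u), w s(v, u) := rfl

lemma lower (hn : 1 ≤ n) (hm : 1 ≤ m) (hnm : 6 < n + m) (a : Fin n) (b : Fin m) (t : ℕ) (ht : t ≤ 2)
    (w : Sym2 (Fin n ⊕ Fin m) → ℕ)
    (hw : ∀ u v, (addEdge (cliquePair n m) (inl a) (inr b)).Adj u v → w s(u, v) ∈ Finset.Icc 1 t)
    (hinj : ProductIrregular (addEdge (cliquePair n m) (inl a) (inr b)) w) : False := by
  set G := addEdge (cliquePair n m) (inl a) (inr b) with hG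
  have hw2 : ∀ u v, G.Adj u v → w s(u, v) ∣ 2 := by
    intro u v huv
    have := hw u v huv
    simp only [Finset.mem_Icc] at this
    have h12 : w s(u, v) = 1 ∨ w s(u, v) = 2 := by omega
    rcases h12 with h | h <;> simp [h]
  have hdvd : ∀ v, pdeg G w v ∣ 2 ^ (Finset.univ.filter (fun u => G.Adj v u)).card := by
    intro v
    rw [pdeg_eq, ← Finset.prod_const 2]
    exact Finset.prod_dvd_prod_of_dvd _ _ (fun u hu => hw2 v u (Finset.mem_filter.mp hu).2)
  have hpow : ∀ v, ∃ e, e ≤ (Finset.univ.filter (fun u => G.Adj v u)).card ∧ pdeg G w v = 2 ^ e :=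
    fun v => (Nat.dvd_prime_pow Nat.prime_two).mp (hdvd v)
  choose e he1 he2 using hpow
  have einj : Function.Injective e := by
    intro u v huv
    apply hinj
    rw [he2, he2, huv]
  -- case : both sides at least 2
  rcases Nat.lt_or_ge n 2 with hn1 | hn2
  · -- n = 1
    have hn1' : n = 1 := by omega
    subst hn1'
    have hm6 : 6 ≤ m := by omega
    have hDr : ∀ j : Fin m, (Finset.univ.filter (fun u => G.Adj (inr j) u)).card
        = (m - 1) + (if j = b then 1 else 0) := deg_inr a b
    have hDl : ∀ i : Fin 1, (Finset.univ.filter (fun u => G.Adj (inl i) u)).card = 1 := by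
      intro i
      have h : (Finset.univ.filter (fun u => G.Adj (inl i) u)).card
          = (1 - 1) + (if i = a then 1 else 0) := deg_inl a b i
      rw [if_pos (Subsingleton.elim i a)] at h
      omega
    have hle : ∀ v, e v ≤ m := by
      intro v
      rcases v with i | j
      · have := he1 (inl i)
        rw [hDl] at this
        omega
      · have := he1 (inr j)
        rw [hDr] at this
        split_ifs at this <;> omega
    have himg : Finset.univ.image e = Finset.range (m + 1) := by
      apply Finset.eq_of_subset_of_card_le
      · intro x hx
        obtain ⟨v, -, rfl⟩ := Finset.mem_image.mp hx
        exact Finset.mem_range.mpr (by have := hle v; omega)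
      · rw [Finset.card_range, Finset.card_image_of_injective _ einj, Finset.card_univ]
        simp only [Fintype.card_sum, Fintype.card_fin]
        omega
    obtain ⟨x, -, hx⟩ := Finset.mem_image.mp (himg ▸ Finset.mem_range.mpr (Nat.lt_succ_self m))
    obtain ⟨v0, -, hv0⟩ := Finset.mem_image.mp (himg ▸ Finset.mem_range.mpr (by omega : 0 < m + 1))
    have hxb : x = inr b := by
      rcases x with i | j
      · have := he1 (inl i)
        rw [hDl] at this
        omega
      · rcases eq_or_ne j b with rfl | hne
        · rfl
        · have := he1 (inr j)
          rw [hDr, if_neg hne] at this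
          omega
    subst hxb
    have hpb : pdeg G w (inr b) = 2 ^ m := by rw [he2, hx]
    have hp0 : pdeg G w v0 = 1 := by rw [he2, hv0, pow_zero]
    have hvne : v0 ≠ inr b := by
      intro hc
      rw [hc, hx] at hv0
      omega
    have hadj : G.Adj (inr b) v0 := by
      rcases v0 with i | j
      · rw [hG, adj_iff]
        exact Or.inr (Or.inr ⟨rfl, by rw [Subsingleton.elim i a]⟩)
      · rw [hG, adj_iff]
        refine Or.inl ⟨fun hc => hvne (by rw [hc]), rfl⟩
    have hmem : v0 ∈ Finset.univ.filter (fun u => G.Adj (inr b) u) :=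
      Finset.mem_filter.mpr ⟨Finset.mem_univ _, hadj⟩
    have hsplit : w s(inr b, v0) * ∏ u ∈ (Finset.univ.filter (fun u => G.Adj (inr b) u)).erase v0,
        w s(inr b, u) = pdeg G w (inr b) := by
      rw [pdeg_eq]
      exact Finset.mul_prod_erase _ (fun u => w s(inr b, u)) hmem
    have hw1 : w s(inr b, v0) = 1 := by
      have hmem' : inr b ∈ Finset.univ.filter (fun u => G.Adj v0 u) :=
        Finset.mem_filter.mpr ⟨Finset.mem_univ _, hadj.symm⟩
      have : w s(v0, inr b) ∣ pdeg G w v0 := by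
        rw [pdeg_eq]
        exact Finset.dvd_prod_of_mem _ hmem'
      rw [hp0, Nat.dvd_one] at this
      rw [Sym2.eq_swap]
      exact this
    have hQ : (∏ u ∈ (Finset.univ.filter (fun u => G.Adj (inr b) u)).erase v0, w s(inr b, u))
        ∣ 2 ^ (m - 1) := by
      have hcard : ((Finset.univ.filter (fun u => G.Adj (inr b) u)).erase v0).card = m - 1 := by
        rw [Finset.card_erase_of_mem hmem, hDr, if_pos rfl]
        omega
      rw [← hcard, ← Finset.prod_const 2]
      refine Finset.prod_dvd_prod_of_dvd _ _ (fun u hu => ?_)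
      exact hw2 _ _ (Finset.mem_filter.mp (Finset.mem_of_mem_erase hu)).2
    rw [hw1, one_mul, hpb] at hsplit
    rw [hsplit] at hQ
    have := (Nat.pow_dvd_pow_iff_le_right (by norm_num : 1 < 2)).mp hQ
    omega
  rcases Nat.lt_or_ge m 2 with hm1 | hm2
  · -- m = 1
    have hm1' : m = 1 := by omega
    subst hm1'
    have hn6 : 6 ≤ n := by omega
    have hDl : ∀ i : Fin n, (Finset.univ.filter (fun u => G.Adj (inl i) u)).card
        = (n - 1) + (if i = a then 1 else 0) := deg_inl a b
    have hDr : ∀ j : Fin 1, (Finset.univ.filter (fun u => G.Adj (inr j) u)).card = 1 := by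
      intro j
      have h : (Finset.univ.filter (fun u => G.Adj (inr j) u)).card
          = (1 - 1) + (if j = b then 1 else 0) := deg_inr a b j
      rw [if_pos (Subsingleton.elim j b)] at h
      omega
    have hle : ∀ v, e v ≤ n := by
      intro v
      rcases v with i | j
      · have := he1 (inl i)
        rw [hDl] at this
        split_ifs at this <;> omega
      · have := he1 (inr j)
        rw [hDr] at this
        omega
    have himg : Finset.univ.image e = Finset.range (n + 1) := by
      apply Finset.eq_of_subset_of_card_le
      · intro x hx
        obtain ⟨v, -, rfl⟩ := Finset.mem_image.mp hx
        exact Finset.mem_range.mpr (by have := hle v; omega)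
      · rw [Finset.card_range, Finset.card_image_of_injective _ einj, Finset.card_univ]
        simp only [Fintype.card_sum, Fintype.card_fin]
        omega
    obtain ⟨x, -, hx⟩ := Finset.mem_image.mp (himg ▸ Finset.mem_range.mpr (Nat.lt_succ_self n))
    obtain ⟨v0, -, hv0⟩ := Finset.mem_image.mp (himg ▸ Finset.mem_range.mpr (by omega : 0 < n + 1))
    have hxa : x = inl a := by
      rcases x with i | j
      · rcases eq_or_ne i a with rfl | hne
        · rfl
        · have := he1 (inl i)
          rw [hDl, if_neg hne] at this
          omega
      · have := he1 (inr j)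
        rw [hDr] at this
        omega
    subst hxa
    have hpa : pdeg G w (inl a) = 2 ^ n := by rw [he2, hx]
    have hp0 : pdeg G w v0 = 1 := by rw [he2, hv0, pow_zero]
    have hvne : v0 ≠ inl a := by
      intro hc
      rw [hc, hx] at hv0
      omega
    have hadj : G.Adj (inl a) v0 := by
      rcases v0 with i | j
      · rw [hG, adj_iff]
        refine Or.inl ⟨fun hc => hvne (by rw [hc]), rfl⟩
      · rw [hG, adj_iff]
        exact Or.inr (Or.inl ⟨rfl, by rw [Subsingleton.elim j b]⟩)
    have hmem : v0 ∈ Finset.univ.filter (fun u => G.Adj (inl a) u) :=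
      Finset.mem_filter.mpr ⟨Finset.mem_univ _, hadj⟩
    have hsplit : w s(inl a, v0) * ∏ u ∈ (Finset.univ.filter (fun u => G.Adj (inl a) u)).erase v0,
        w s(inl a, u) = pdeg G w (inl a) := by
      rw [pdeg_eq]
      exact Finset.mul_prod_erase _ (fun u => w s(inl a, u)) hmem
    have hw1 : w s(inl a, v0) = 1 := by
      have hmem' : inl a ∈ Finset.univ.filter (fun u => G.Adj v0 u) :=
        Finset.mem_filter.mpr ⟨Finset.mem_univ _, hadj.symm⟩
      have : w s(v0, inl a) ∣ pdeg G w v0 := by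
        rw [pdeg_eq]
        exact Finset.dvd_prod_of_mem _ hmem'
      rw [hp0, Nat.dvd_one] at this
      rw [Sym2.eq_swap]
      exact this
    have hQ : (∏ u ∈ (Finset.univ.filter (fun u => G.Adj (inl a) u)).erase v0, w s(inl a, u))
        ∣ 2 ^ (n - 1) := by
      have hcard : ((Finset.univ.filter (fun u => G.Adj (inl a) u)).erase v0).card = n - 1 := by
        rw [Finset.card_erase_of_mem hmem, hDl, if_pos rfl]
        omega
      rw [← hcard, ← Finset.prod_const 2]
      refine Finset.prod_dvd_prod_of_dvd _ _ (fun u hu => ?_)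
      exact hw2 _ _ (Finset.mem_filter.mp (Finset.mem_of_mem_erase hu)).2
    rw [hw1, one_mul, hpa] at hsplit
    rw [hsplit] at hQ
    have := (Nat.pow_dvd_pow_iff_le_right (by norm_num : 1 < 2)).mp hQ
    omega
  · -- 2 ≤ n, 2 ≤ m : pigeonhole
    set M := max n m with hM
    have himg : ∀ v, pdeg G w v ∈ (Finset.range (M + 1)).image (2 ^ ·) := by
      intro v
      refine Finset.mem_image.mpr ⟨e v, Finset.mem_range.mpr ?_, (he2 v).symm⟩
      rcases v with i | j
      · have := he1 (inl i)
        rw [deg_inl a b i] at this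
        have : e (inl i) ≤ n := by split_ifs at this <;> omega
        omega
      · have := he1 (inr j)
        rw [deg_inr a b j] at this
        have : e (inr j) ≤ m := by split_ifs at this <;> omega
        omega
    have hcard : (Finset.univ : Finset (Fin n ⊕ Fin m)).card
        ≤ ((Finset.range (M + 1)).image (2 ^ ·)).card :=
      Finset.card_le_card_of_injOn (pdeg G w) (fun v _ => himg v)
        (fun x _ y _ h => hinj h)
    rw [Finset.card_univ] at hcard
    have h1 : ((Finset.range (M + 1)).image (2 ^ ·)).card ≤ M + 1 :=
      le_trans Finset.card_image_le (by rw [Finset.card_range])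
    have h2 : Fintype.card (Fin n ⊕ Fin m) = n + m := by simp
    rw [h2] at hcard
    omega

end PS11

/-- For all `n, m ≥ 1` with `n + m > 6`, every graph obtained from `K_n + K_m` by adding
one edge between the two components has product irregularity strength `3`. -/
theorem stmt_11 (n m : ℕ) (hn : 1 ≤ n) (hm : 1 ≤ m) (hnm : 6 < n + m)
    (a : Fin n) (b : Fin m) :
    ps (addEdge (cliquePair n m) (Sum.inl a) (Sum.inr b)) = 3 := by
  have h3 : 3 ∈ {s : ℕ | ∃ w : Sym2 (Fin n ⊕ Fin m) → ℕ,
      (∀ u v : Fin n ⊕ Fin m,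
        (addEdge (cliquePair n m) (Sum.inl a) (Sum.inr b)).Adj u v → w s(u, v) ∈ Finset.Icc 1 s) ∧
      ProductIrregular (addEdge (cliquePair n m) (Sum.inl a) (Sum.inr b)) w} := by
    rcases le_or_gt 5 m with hm5 | hm5
    · exact PS11.upperAB hn hm5 a b
    · rcases le_or_gt 5 n with hn5 | hn5
      · exact PS11.upperC hn5 hm (by omega) a b
      · have hc : (n = 3 ∧ m = 4) ∨ (n = 4 ∧ m = 3) ∨ (n = 4 ∧ m = 4) := by omega
        rcases hc with ⟨h1, h2⟩ | ⟨h1, h2⟩ | ⟨h1, h2⟩ <;> subst h1 <;> subst h2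
        · exact PS11.upperD34 a b
        · exact PS11.upperD43 a b
        · exact PS11.upperD44 a b
  refine le_antisymm (Nat.sInf_le h3) (le_csInf ⟨3, h3⟩ ?_)
  intro s hs
  by_contra hcon
  obtain ⟨w, hw, hinj⟩ := hs
  exact PS11.lower hn hm hnm a b s (by omega) w hw hinj
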